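/- Define Ψ : Ω₂ → ℝ² by Ψ(a,b) = (b, (2+√2)·b·⌊(1+a)/((2+√2)b)⌋ − a). Then Ψ is injective on Ω₂, Ψ maps Ω₂ into Ω₁, and Ψ preserves two-dimensional Lebesgue measure: for every Lebesgue-measurable set A ⊆ Ω₂, the measure of Ψ(A) equals the measure of A. (Ψ is the branch T_{Ω₂} of the return map of the horocycle flow, mapping Ω₂ into Ω₁.) -/

import Mathlib

open Real MeasureTheory Set

noncomputable section

/-- The region Ω₁ = {(a,b) : 0 < a ≤ 1, 1 − (2+√2)a < b ≤ 1}. -/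
def Ω₁ : Set (ℝ × ℝ) :=
  {p | 0 < p.1 ∧ p.1 ≤ 1 ∧ 1 - (2 + Real.sqrt 2) * p.1 < p.2 ∧ p.2 ≤ 1}

/-- The region Ω₂ = {(a,b) : 0 < a ≤ 1, 1 − a < b ≤ 1}. -/
def Ω₂ : Set (ℝ × ℝ) := {p | 0 < p.1 ∧ p.1 ≤ 1 ∧ 1 - p.1 < p.2 ∧ p.2 ≤ 1}

/-- The branch T_{Ω₂} of the return map: Ψ(a,b) = (b, (2+√2)b·⌊(1+a)/((2+√2)b)⌋ − a). -/
def Ψ (p : ℝ × ℝ) : ℝ × ℝ :=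
  (p.2, (2 + Real.sqrt 2) * p.2 * (⌊(1 + p.1) / ((2 + Real.sqrt 2) * p.2)⌋ : ℤ) - p.1)

namespace TOmega2Aux

lemma c_gt_one : (1 : ℝ) < 2 + Real.sqrt 2 := by
  have := Real.sqrt_nonneg 2
  linarith

/-- The affine branch maps as measurable equivalences. -/
def en (n : ℤ) : (ℝ × ℝ) ≃ᵐ (ℝ × ℝ) where
  toFun := fun p => (p.2, (2 + Real.sqrt 2) * p.2 * (n : ℝ) - p.1)
  invFun := fun q => ((2 + Real.sqrt 2) * q.1 * (n : ℝ) - q.2, q.1)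
  left_inv := by intro p; simp
  right_inv := by intro q; simp
  measurable_toFun := by
    apply Measurable.prod
    · exact measurable_snd
    · exact ((measurable_const.mul measurable_snd).mul measurable_const).sub measurable_fst
  measurable_invFun := by
    apply Measurable.prod
    · exact ((measurable_const.mul measurable_fst).mul measurable_const).sub measurable_snd
    · exact measurable_fst

lemma en_measurePreserving (n : ℤ) :
    MeasurePreserving (en n) (volume : Measure (ℝ × ℝ)) volume := by
  have hswap : MeasurePreserving (Prod.swap : ℝ × ℝ → ℝ × ℝ) volume volume := by
    rw [Measure.volume_eq_prod]
    exact Measure.measurePreserving_swap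
  have hskew : MeasurePreserving
      (fun p : ℝ × ℝ => (p.1, (2 + Real.sqrt 2) * p.1 * (n : ℝ) - p.2))
      volume volume := by
    rw [Measure.volume_eq_prod]
    have h := MeasurePreserving.skew_product (μb := (volume : Measure ℝ))
      (f := (id : ℝ → ℝ)) (g := fun x y => (2 + Real.sqrt 2) * x * (n : ℝ) - y)
      (MeasurePreserving.id volume)
      (by
        have : Function.uncurry (fun x y => (2 + Real.sqrt 2) * x * (n : ℝ) - y)
            = fun p : ℝ × ℝ => (2 + Real.sqrt 2) * p.1 * (n : ℝ) - p.2 := rfl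
        rw [this]
        exact ((measurable_const.mul measurable_fst).mul measurable_const).sub measurable_snd)
      (ae_of_all _ fun x =>
        (Measure.measurePreserving_sub_left volume ((2 + Real.sqrt 2) * x * (n : ℝ))).map_eq)
    exact h
  have : (en n : ℝ × ℝ → ℝ × ℝ) =
      (fun p : ℝ × ℝ => (p.1, (2 + Real.sqrt 2) * p.1 * (n : ℝ) - p.2)) ∘ Prod.swap := by
    funext p; rfl
  rw [show ((en n : ℝ × ℝ → ℝ × ℝ)) = _ from this]
  exact hskew.comp hswap

lemma en_image_volume (n : ℤ) {S : Set (ℝ × ℝ)} (hS : MeasurableSet S) :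
    volume ((en n) '' S) = volume S := by
  rw [MeasurableEquiv.image_eq_preimage_symm]
  exact ((en_measurePreserving n).symm (en n)).measure_preimage hS.nullMeasurableSet

lemma b_pos {p : ℝ × ℝ} (hp : p ∈ Ω₂) : 0 < p.2 := by
  obtain ⟨h1, h2, h3, h4⟩ := hp
  linarith

lemma cb_pos {p : ℝ × ℝ} (hp : p ∈ Ω₂) : 0 < (2 + Real.sqrt 2) * p.2 := by
  have := b_pos hp
  have := c_gt_one
  nlinarith

lemma floor_bounds {p : ℝ × ℝ} (hp : p ∈ Ω₂) :
    ((⌊(1 + p.1) / ((2 + Real.sqrt 2) * p.2)⌋ : ℤ) : ℝ) * ((2 + Real.sqrt 2) * p.2) ≤ 1 + p.1 ∧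
    1 + p.1 < ((⌊(1 + p.1) / ((2 + Real.sqrt 2) * p.2)⌋ : ℤ) + 1 : ℝ) * ((2 + Real.sqrt 2) * p.2) := by
  have hcb := cb_pos hp
  constructor
  · have := Int.floor_le ((1 + p.1) / ((2 + Real.sqrt 2) * p.2))
    calc ((⌊(1 + p.1) / ((2 + Real.sqrt 2) * p.2)⌋ : ℤ) : ℝ) * ((2 + Real.sqrt 2) * p.2)
        ≤ ((1 + p.1) / ((2 + Real.sqrt 2) * p.2)) * ((2 + Real.sqrt 2) * p.2) := by
          exact mul_le_mul_of_nonneg_right this hcb.le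
      _ = 1 + p.1 := by rw [div_mul_cancel₀ _ hcb.ne']
  · have := Int.lt_floor_add_one ((1 + p.1) / ((2 + Real.sqrt 2) * p.2))
    exact (div_lt_iff₀ hcb).mp this

lemma inj_on : Set.InjOn Ψ Ω₂ := by
  rintro ⟨a, b⟩ hp ⟨a', b'⟩ hq heq
  have hb : b = b' := congrArg Prod.fst heq
  subst hb
  set n : ℤ := ⌊(1 + a) / ((2 + Real.sqrt 2) * b)⌋ with hn
  set m : ℤ := ⌊(1 + a') / ((2 + Real.sqrt 2) * b)⌋ with hm
  have h2 : (2 + Real.sqrt 2) * b * (n : ℝ) - a = (2 + Real.sqrt 2) * b * (m : ℝ) - a' :=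
    congrArg Prod.snd heq
  have hfb1 := (floor_bounds hp).1
  have hfb2 := (floor_bounds hp).2
  have hfb3 := (floor_bounds hq).1
  have hfb4 := (floor_bounds hq).2
  have hcbp := cb_pos hp
  simp only at hfb1 hfb2 hfb3 hfb4 hcbp
  obtain ⟨ha1, ha2, ha3, ha4⟩ := hp
  obtain ⟨ha1', ha2', ha3', ha4'⟩ := hq
  simp only at ha1 ha2 ha3 ha4 ha1' ha2' ha3' ha4'
  have hb0 : 0 < b := by linarith
  have hc := c_gt_one
  have hcb : b < (2 + Real.sqrt 2) * b := by nlinarith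
  -- n*cb ∈ (s+1-b, s+1], m*cb ∈ (s+1-b, s+1] where s is the common second coordinate
  have hnm : n = m := by
    by_contra hne
    rcases lt_or_gt_of_ne hne with h | h
    · have : ((n : ℝ) + 1) ≤ (m : ℝ) := by exact_mod_cast h
      have hd : ((m : ℝ) - n) * ((2 + Real.sqrt 2) * b) ≥ (2 + Real.sqrt 2) * b := by
        nlinarith [hcbp]
      -- m*cb - a' = n*cb - a, so m*cb - n*cb = a' - a ∈ (-b, b) roughly
      -- n*cb ≤ 1 + a, a' ≤ 1, a > 1 - b, a' > 1 - b, m*cb ≤ 1+a'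
      -- m*cb - n*cb = a' - a; |a' - a| < b since both a,a' ∈ (1-b, 1]
      have : (m : ℝ) * ((2 + Real.sqrt 2) * b) - (n : ℝ) * ((2 + Real.sqrt 2) * b) = a' - a := by
        nlinarith [h2]
      nlinarith [hcbp]
    · have : ((m : ℝ) + 1) ≤ (n : ℝ) := by exact_mod_cast h
      have : (n : ℝ) * ((2 + Real.sqrt 2) * b) - (m : ℝ) * ((2 + Real.sqrt 2) * b) = a - a' := by
        nlinarith [h2]
      nlinarith [hcbp]
  rw [hnm] at h2
  have : a = a' := by linarith
  rw [this]

lemma maps_to : Set.MapsTo Ψ Ω₂ Ω₁ := by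
  rintro ⟨a, b⟩ hp
  have hfb1 := (floor_bounds hp).1
  have hfb2 := (floor_bounds hp).2
  simp only at hfb1 hfb2
  obtain ⟨ha1, ha2, ha3, ha4⟩ := hp
  simp only at ha1 ha2 ha3 ha4
  have hb0 : 0 < b := by linarith
  constructor
  · exact hb0
  constructor
  · exact ha4
  constructor
  · show 1 - (2 + Real.sqrt 2) * b < (2 + Real.sqrt 2) * b * _ - a
    nlinarith
  · show (2 + Real.sqrt 2) * b * _ - a ≤ 1
    nlinarith

end TOmega2Aux

/-- Ψ is injective on Ω₂, maps Ω₂ into Ω₁, and preserves two-dimensional Lebesgue measure. -/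
theorem T_Omega2_injective_measure_preserving :
    Set.InjOn Ψ Ω₂ ∧ Set.MapsTo Ψ Ω₂ Ω₁ ∧
    ∀ A : Set (ℝ × ℝ), A ⊆ Ω₂ → MeasurableSet A → volume (Ψ '' A) = volume A := by
  refine ⟨TOmega2Aux.inj_on, TOmega2Aux.maps_to, ?_⟩
  intro A hA hAm
  set F : ℝ × ℝ → ℤ := fun p => ⌊(1 + p.1) / ((2 + Real.sqrt 2) * p.2)⌋ with hF
  have hFm : Measurable F :=
    ((measurable_const.add measurable_fst).div (measurable_const.mul measurable_snd)).floor
  set B : ℤ → Set (ℝ × ℝ) := fun n => A ∩ F ⁻¹' {n} with hB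
  have hBm : ∀ n, MeasurableSet (B n) := fun n => hAm.inter (hFm (measurableSet_singleton n))
  have hBU : ⋃ n, B n = A := by
    ext p
    simp only [hB, mem_iUnion, mem_inter_iff, mem_preimage, mem_singleton_iff]
    exact ⟨fun ⟨n, h, _⟩ => h, fun h => ⟨F p, h, rfl⟩⟩
  have hBd : Pairwise (Function.onFun Disjoint B) := by
    intro n m hnm
    simp only [Function.onFun, hB]
    apply Set.disjoint_left.mpr
    rintro p ⟨_, hp1⟩ ⟨_, hp2⟩
    simp only [mem_preimage, mem_singleton_iff] at hp1 hp2
    exact hnm (hp1 ▸ hp2 ▸ rfl)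
  have hΨen : ∀ n, ∀ p ∈ B n, Ψ p = TOmega2Aux.en n p := by
    rintro n p ⟨_, hp⟩
    simp only [mem_preimage, mem_singleton_iff] at hp
    simp only [Ψ, TOmega2Aux.en, MeasurableEquiv.coe_mk, Equiv.coe_fn_mk, ← hp, hF]
  have himg : ∀ n, Ψ '' (B n) = TOmega2Aux.en n '' (B n) := fun n =>
    Set.image_congr (hΨen n)
  have hU : Ψ '' A = ⋃ n, TOmega2Aux.en n '' B n := by
    rw [← hBU, Set.image_iUnion]
    exact iUnion_congr himg
  have himgm : ∀ n, MeasurableSet (TOmega2Aux.en n '' B n) := by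
    intro n
    rw [MeasurableEquiv.image_eq_preimage_symm]
    exact (TOmega2Aux.en n).symm.measurable (hBm n)
  have himgd : Pairwise (Function.onFun Disjoint fun n => TOmega2Aux.en n '' B n) := by
    intro n m hnm
    apply Set.disjoint_left.mpr
    rintro q ⟨p1, hp1, hq1⟩ ⟨p2, hp2, hq2⟩
    have e1 : Ψ p1 = q := (hΨen n p1 hp1).symm ▸ hq1
    have e2 : Ψ p2 = q := (hΨen m p2 hp2).symm ▸ hq2
    have hp1A : p1 ∈ Ω₂ := hA hp1.1
    have hp2A : p2 ∈ Ω₂ := hA hp2.1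
    have : p1 = p2 := TOmega2Aux.inj_on hp1A hp2A (e1.trans e2.symm)
    have h1 : F p1 = n := hp1.2
    have h2 : F p2 = m := hp2.2
    exact hnm (h1 ▸ this ▸ h2)
  rw [hU, measure_iUnion himgd himgm]
  have : ∀ n, volume (TOmega2Aux.en n '' B n) = volume (B n) := fun n =>
    TOmega2Aux.en_image_volume n (hBm n)
  simp_rw [this]
  rw [← measure_iUnion hBd hBm, hBU]
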